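/- Let K be a compact Hausdorff space and I a closed ideal of C(K,ℂ). Define F = ⋂_{f ∈ I} f⁻¹(0). Then F is closed and I = {f ∈ C(K,ℂ) : f vanishes on F}. -/
import Mathlib

/-- For a closed ideal `I` of `C(K,ℂ)` on a compact Hausdorff space, with
`F = ⋂_{f ∈ I} f⁻¹(0)`, the set `F` is closed and `I` is exactly the set of functions
vanishing on `F`. -/
theorem stmt_5 {K : Type*} [TopologicalSpace K] [CompactSpace K] [T2Space K]
    (I : Ideal C(K, ℂ)) (hI : IsClosed (I : Set C(K, ℂ)))
    (F : Set K) (hF : F = ⋂ f ∈ I, (f : C(K, ℂ)) ⁻¹' {0}) :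
    IsClosed F ∧ (I : Set C(K, ℂ)) = {f : C(K, ℂ) | ∀ x ∈ F, f x = 0} := by
  have hFc : F = (ContinuousMap.setOfIdeal I)ᶜ := by
    rw [hF]
    ext x
    simp [ContinuousMap.setOfIdeal, Set.mem_iInter]
  constructor
  · rw [hFc]
    exact (ContinuousMap.setOfIdeal_open I).isClosed_compl
  · have key := ContinuousMap.idealOfSet_ofIdeal_eq_closure (𝕜 := ℂ) I
    rw [Ideal.closure_eq_of_isClosed I hI] at key
    have : (I : Set C(K, ℂ)) = (ContinuousMap.idealOfSet ℂ (ContinuousMap.setOfIdeal I) : Set C(K, ℂ)) := by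
      rw [key]
    rw [this]
    ext f
    rw [SetLike.mem_coe, ContinuousMap.mem_idealOfSet]
    simp [hFc]
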